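/- Let (J_m) be {0,1}-valued random variables adapted to a filtration (F_m), representing correct guesses, with P(J_{m+1} = 1 | F_m) = max_k p_{m+1,k} where p_{m+1,k} are F_m-measurable allocation probabilities, nonnegative and summing to 1 over k = 1,…,K. If for each k, p_{m+1,k} → ρ_k in probability as m → ∞ (with ρ_k ≥ 0, Σ ρ_k = 1), then SB_n := (1/n) Σ_{m=1}^n P(J_m = 1) converges to max_k ρ_k. -/

import Mathlib

open MeasureTheory Filter Topology

lemma measurable_sup'_fin {Ω : Type*} [MeasurableSpace Ω] {K : ℕ} [NeZero K]
    (f : Fin K → Ω → ℝ) (hf : ∀ k, Measurable (f k)) :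
    Measurable (fun ω => Finset.univ.sup' Finset.univ_nonempty (fun k => f k ω)) := by
  have h := Finset.measurable_sup' (α := ℝ) (Finset.univ_nonempty (α := Fin K))
    (f := f) (fun k _ => hf k)
  have he : (Finset.univ.sup' Finset.univ_nonempty f)
      = fun ω => Finset.univ.sup' Finset.univ_nonempty (fun k => f k ω) := by
    funext ω
    rw [Finset.sup'_apply]
  rwa [he] at h

lemma sup'_abs_sub_le {K : ℕ} [NeZero K] (f g : Fin K → ℝ) :
    |Finset.univ.sup' Finset.univ_nonempty f - Finset.univ.sup' Finset.univ_nonempty g|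
      ≤ Finset.univ.sup' Finset.univ_nonempty (fun k => |f k - g k|) := by
  rw [abs_sub_le_iff]
  constructor <;>
  · rw [sub_le_iff_le_add]
    apply Finset.sup'_le
    intro k hk
    have h1 : f k - g k ≤ |f k - g k| := le_abs_self _
    have h2 : g k - f k ≤ |f k - g k| := by rw [abs_sub_comm]; exact le_abs_self _
    have h3 := Finset.le_sup' (fun k => |f k - g k|) hk
    have h4 := Finset.le_sup' f hk
    have h5 := Finset.le_sup' g hk
    linarith

set_option maxHeartbeats 1000000 in
/-- if the conditional probability of a correct guess given
`F_m` equals `max_k p_{m+1,k}`, and the allocation probabilities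
`p_{m,k}` converge in probability to `ρ_k`, then the selection bias
`SB_n = (1/n) Σ_{m=1}^n P(J_m = 1)` converges to `max_k ρ_k`. -/
theorem stmt12 {Ω : Type*} {m0 : MeasurableSpace Ω} (μ : Measure Ω)
    [IsProbabilityMeasure μ] (K : ℕ) [NeZero K] (F : Filtration ℕ m0)
    (J : ℕ → Ω → ℝ) (hJ01 : ∀ m ω, J m ω = 0 ∨ J m ω = 1)
    (hJadapted : ∀ m, StronglyMeasurable[F m] (J m))
    (p : ℕ → Fin K → Ω → ℝ)
    (hpmeas : ∀ m k, StronglyMeasurable[F m] (p (m + 1) k))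
    (hpnonneg : ∀ m k ω, 0 ≤ p m k ω)
    (hpsum : ∀ m ω, ∑ k, p m k ω = 1)
    (hguess : ∀ m,
      μ[({ω | J (m + 1) ω = 1}).indicator (fun _ => (1 : ℝ)) | F m]
        =ᵐ[μ] fun ω => Finset.univ.sup' Finset.univ_nonempty (fun k => p (m + 1) k ω))
    (ρ : Fin K → ℝ) (hρnn : ∀ k, 0 ≤ ρ k) (hρsum : ∑ k, ρ k = 1)
    (hconv : ∀ k, TendstoInMeasure μ (fun m => p m k) atTop (fun _ => ρ k)) :
    Tendsto
      (fun n : ℕ => (1 / (n : ℝ)) * ∑ m ∈ Finset.Icc 1 n, (μ {ω | J m ω = 1}).toReal)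
      atTop (𝓝 (Finset.univ.sup' Finset.univ_nonempty ρ)) := by
  classical
  set M : ℝ := Finset.univ.sup' Finset.univ_nonempty ρ with hM
  set g : ℕ → Ω → ℝ := fun m ω => Finset.univ.sup' Finset.univ_nonempty (fun k => p m k ω)
    with hg
  -- each p m k ≤ 1
  have hple : ∀ m k ω, p m k ω ≤ 1 := by
    intro m k ω
    calc p m k ω ≤ ∑ j, p m j ω :=
          Finset.single_le_sum (fun j _ => hpnonneg m j ω) (Finset.mem_univ k)
      _ = 1 := hpsum m ω
  -- bounds on g
  have hg01 : ∀ m ω, 0 ≤ g m ω ∧ g m ω ≤ 1 := by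
    intro m ω
    constructor
    · obtain ⟨k⟩ := Fin.pos_iff_nonempty.mp (Nat.pos_of_ne_zero (NeZero.ne K))
      exact le_trans (hpnonneg m k ω)
        (Finset.le_sup' (fun j => p m j ω) (Finset.mem_univ k))
    · exact Finset.sup'_le _ _ fun k _ => hple m k ω
  -- measurability of g (m+1)
  have hgmeas : ∀ m, Measurable[m0] (g (m + 1)) := by
    intro m
    have h : Measurable[F m] (g (m + 1)) :=
      @measurable_sup'_fin Ω (F m) K _ (fun k => p (m + 1) k)
        (fun k => (hpmeas m k).measurable)
    exact h.mono (F.le m) le_rfl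
  -- Step A: P(J (m+1) = 1) = ∫ g (m+1)
  have hA : ∀ m, (μ {ω | J (m + 1) ω = 1}).toReal = ∫ ω, g (m + 1) ω ∂μ := by
    intro m
    have hsmeas : MeasurableSet {ω | J (m + 1) ω = 1} := by
      have : MeasurableSet[F (m + 1)] {ω | J (m + 1) ω = 1} :=
        (hJadapted (m + 1)).measurable (measurableSet_singleton 1)
      exact F.le (m + 1) _ this
    have h1 : ∫ ω, g (m + 1) ω ∂μ
        = ∫ ω, (μ[({ω | J (m + 1) ω = 1}).indicator (fun _ => (1 : ℝ)) | F m]) ω ∂μ :=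
      integral_congr_ae (hguess m).symm
    rw [h1, integral_condExp (F.le m), integral_indicator_const _ hsmeas]
    simp [Measure.real]
  -- Step C: g converges in measure to M
  have hCg : TendstoInMeasure μ g atTop (fun _ => M) := by
    intro ε hε
    have hsub : ∀ m, {ω | ε ≤ edist (g m ω) M}
        ⊆ ⋃ k ∈ (Finset.univ : Finset (Fin K)), {ω | ε ≤ edist (p m k ω) (ρ k)} := by
      intro m ω hω
      simp only [Set.mem_setOf_eq] at hω
      obtain ⟨k, hk, hkeq⟩ := Finset.exists_mem_eq_sup' (Finset.univ_nonempty (α := Fin K))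
        (fun k => |p m k ω - ρ k|)
      have hle : dist (g m ω) M ≤ dist (p m k ω) (ρ k) := by
        rw [Real.dist_eq, Real.dist_eq]
        exact le_trans (sup'_abs_sub_le (fun k => p m k ω) ρ) (le_of_eq hkeq)
      simp only [Set.mem_iUnion]
      exact ⟨k, hk, le_trans hω (by rw [edist_dist, edist_dist]; exact ENNReal.ofReal_le_ofReal hle)⟩
    have hbound : ∀ m, μ {ω | ε ≤ edist (g m ω) M}
        ≤ ∑ k, μ {ω | ε ≤ edist (p m k ω) (ρ k)} := fun m =>
      le_trans (measure_mono (hsub m)) (measure_biUnion_finset_le _ _)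
    have hsum0 : Tendsto (fun m => ∑ k, μ {ω | ε ≤ edist (p m k ω) (ρ k)}) atTop (𝓝 0) := by
      have := tendsto_finset_sum (Finset.univ : Finset (Fin K))
        (fun k _ => hconv k ε hε)
      simpa using this
    exact tendsto_of_tendsto_of_tendsto_of_le_of_le tendsto_const_nhds hsum0
      (fun m => zero_le) hbound
  -- Step D: ∫ g (m+1) → M
  have hD : Tendsto (fun m => ∫ ω, g (m + 1) ω ∂μ) atTop (𝓝 M) := by
    apply tendsto_of_subseq_tendsto
    intro ns hns
    have hns' : Tendsto (fun n => ns n + 1) atTop atTop :=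
      (tendsto_add_atTop_nat 1).comp hns
    have hsub : TendstoInMeasure μ (fun n => g (ns n + 1)) atTop (fun _ => M) := by
      intro ε hε
      exact (hCg ε hε).comp hns'
    obtain ⟨ms, _, hms⟩ := hsub.exists_seq_tendsto_ae
    refine ⟨ms, ?_⟩
    have hint : Tendsto (fun n => ∫ ω, g (ns (ms n) + 1) ω ∂μ) atTop
        (𝓝 (∫ _, M ∂μ)) := by
      apply tendsto_integral_of_dominated_convergence (fun _ => (1 : ℝ))
      · exact fun n => (hgmeas (ns (ms n))).aestronglyMeasurable
      · exact integrable_const 1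
      · intro n
        filter_upwards with ω
        rw [Real.norm_eq_abs, abs_le]
        exact ⟨by linarith [(hg01 (ns (ms n) + 1) ω).1], (hg01 (ns (ms n) + 1) ω).2⟩
      · exact hms
    simpa using hint
  -- Step E: combine with Cesàro
  have hE : Tendsto (fun m => (μ {ω | J (m + 1) ω = 1}).toReal) atTop (𝓝 M) := by
    simpa only [hA] using hD
  have hces := hE.cesaro
  have heq : ∀ n : ℕ, (1 / (n : ℝ)) * ∑ m ∈ Finset.Icc 1 n, (μ {ω | J m ω = 1}).toReal
      = (n : ℝ)⁻¹ * ∑ i ∈ Finset.range n, (μ {ω | J (i + 1) ω = 1}).toReal := by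
    intro n
    rw [one_div]
    congr 1
    rw [← Finset.Ico_add_one_right_eq_Icc, Finset.sum_Ico_eq_sum_range]
    simp [add_comm]
  simpa only [heq] using hces
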